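/- Let A = [A11 A12; A21 A22] be a square block matrix over a field K with A22 invertible and A/A22 of size k×k. Define B as the block matrix with block rows [A11 + A11ᵀ, A21ᵀ, A12; A21, 0, A22; A12ᵀ, A22ᵀ, 0], with B11 = A11 + A11ᵀ and B22 the lower-right 2×2 block part. Then B22 is invertible and B/B22 = (A/A22) + (A/A22)ᵀ. Moreover B is symmetric if partitioned accordingly. -/

import Mathlib

open Matrix

/-- symmetrization of a Schur complement.  With
`B = [A11 + A11ᵀ, A21ᵀ, A12; A21, 0, A22; A12ᵀ, A22ᵀ, 0]`, the lower-right 2×2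
block part `B22` is invertible, `B/B22 = (A/A22) + (A/A22)ᵀ`, and `B` is symmetric. -/
theorem stmt2 (K : Type*) [Field K] (k a : ℕ)
    (A11 : Matrix (Fin k) (Fin k) K) (A12 : Matrix (Fin k) (Fin a) K)
    (A21 : Matrix (Fin a) (Fin k) K) (A22 : Matrix (Fin a) (Fin a) K)
    (hA22 : IsUnit A22) :
    let B12 : Matrix (Fin k) (Fin a ⊕ Fin a) K :=
      Matrix.of fun i j => Sum.elim (fun ja => A21ᵀ i ja) (fun ja => A12 i ja) j
    let B21 : Matrix (Fin a ⊕ Fin a) (Fin k) K :=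
      Matrix.of fun i j => Sum.elim (fun ia => A21 ia j) (fun ia => A12ᵀ ia j) i
    let B22 : Matrix (Fin a ⊕ Fin a) (Fin a ⊕ Fin a) K :=
      Matrix.fromBlocks 0 A22 A22ᵀ 0
    IsUnit B22 ∧
    (A11 + A11ᵀ) - B12 * B22⁻¹ * B21
      = (A11 - A12 * A22⁻¹ * A21) + (A11 - A12 * A22⁻¹ * A21)ᵀ ∧
    (Matrix.fromBlocks (A11 + A11ᵀ) B12 B21 B22)ᵀ
      = Matrix.fromBlocks (A11 + A11ᵀ) B12 B21 B22 := by
  intro B12 B21 B22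
  have hB12 : B12 = fromCols A21ᵀ A12 := rfl
  have hB21 : B21 = fromRows A21 A12ᵀ := by ext i j; cases i <;> rfl
  have hd : IsUnit A22.det := (Matrix.isUnit_iff_isUnit_det A22).mp hA22
  have hdT : IsUnit A22ᵀ.det := by rwa [Matrix.det_transpose]
  have hmul : B22 * Matrix.fromBlocks 0 A22ᵀ⁻¹ A22⁻¹ 0 = 1 := by
    show Matrix.fromBlocks 0 A22 A22ᵀ 0 * _ = 1
    rw [Matrix.fromBlocks_multiply]
    simp [Matrix.mul_nonsing_inv _ hdT, Matrix.mul_nonsing_inv _ hd,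
      ← Matrix.fromBlocks_one]
  have hunit : IsUnit B22 :=
    @isUnit_of_invertible _ _ _ (invertibleOfRightInverse _ _ hmul)
  have hinv : B22⁻¹ = Matrix.fromBlocks 0 A22ᵀ⁻¹ A22⁻¹ 0 :=
    Matrix.inv_eq_right_inv hmul
  refine ⟨hunit, ?_, ?_⟩
  · rw [hB12, hB21, hinv, fromCols_mul_fromBlocks, fromCols_mul_fromRows]
    simp only [Matrix.mul_zero, Matrix.zero_mul, add_zero, zero_add]
    have h : A21ᵀ * A22ᵀ⁻¹ * A12ᵀ = (A12 * A22⁻¹ * A21)ᵀ := by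
      rw [Matrix.transpose_mul, Matrix.transpose_mul, Matrix.transpose_nonsing_inv,
        Matrix.mul_assoc]
    rw [h]
    simp only [Matrix.transpose_add, Matrix.transpose_sub]
    abel
  · ext i j
    rcases i with i | (i | i) <;> rcases j with j | (j | j) <;>
      simp [B12, B21, B22, Matrix.fromBlocks, add_comm]
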